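/- arXiv:1806.02680 — 2 statements merged into one kernel-verified Lean document; each statement's English description precedes it below -/
import Mathlib

section
/- The number of parking functions of length n is (n+1)^{n-1}. -/
/-- The weakly increasing sorted version of a vector of naturals. -/
def sortPF {n : ℕ} (p : Fin n → ℕ) : List ℕ :=
  Multiset.sort (↑(List.ofFn p) : Multiset ℕ) (· ≤ ·)

/-- `p` is an `a`-parking function of length `n`: all entries are positive and the
`i`-th entry (0-based) of the sorted version is at most `a + i` (i.e. `a + i - 1` 1-based). -/
def IsAPF (a : ℕ) {n : ℕ} (p : Fin n → ℕ) : Prop :=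
  (∀ i, 1 ≤ p i) ∧ ∀ i : Fin n, (sortPF p).getD i 0 ≤ a + (i : ℕ)

/-- `p` is an ordinary parking function of length `n`. -/
def IsPF {n : ℕ} (p : Fin n → ℕ) : Prop :=
  (∀ i, 1 ≤ p i ∧ p i ≤ n) ∧ ∀ i : Fin n, (sortPF p).getD i 0 ≤ (i : ℕ) + 1


open Finset


lemma sortPF_sorted {n : ℕ} (p : Fin n → ℕ) : (sortPF p).Pairwise (· ≤ ·) :=
  Multiset.pairwise_sort _ _

lemma sortPF_length {n : ℕ} (p : Fin n → ℕ) : (sortPF p).length = n := by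
  simp [sortPF]

lemma countP_sortPF {n : ℕ} (p : Fin n → ℕ) (q : ℕ → Bool) :
    (sortPF p).countP q = (List.ofFn p).countP q := by
  have h : ((sortPF p : List ℕ) : Multiset ℕ) = ↑(List.ofFn p) := Multiset.sort_eq _ _
  have := congrArg (Multiset.countP (fun x => q x)) h
  simpa [Multiset.coe_countP] using this
lemma countP_ofFn {n : ℕ} (p : Fin n → ℕ) (q : ℕ → Bool) :
    (List.ofFn p).countP q = (univ.filter fun i => q (p i)).card := by
  rw [List.ofFn_eq_map, List.countP_map]
  have h1 : (univ.filter fun i => q (p i)).card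
      = Multiset.countP (fun i => q (p i)) (univ : Finset (Fin n)).val := by
    rw [Multiset.countP_eq_card_filter]; rfl
  rw [h1, Fin.univ_def]
  show _ = Multiset.countP (fun i => q (p i) = true) (↑(List.finRange n) : Multiset (Fin n))
  rw [Multiset.coe_countP]
  apply List.countP_congr
  intro x _
  simp [Function.comp]

lemma sorted_getD_le_iff {l : List ℕ} (hl : l.Pairwise (· ≤ ·)) {i : ℕ} (hi : i < l.length)
    (k : ℕ) : l.getD i 0 ≤ k ↔ i < l.countP (fun x => x ≤ k) := by
  rw [List.getD_eq_getElem l 0 hi]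
  have hsplit : l.countP (fun x => x ≤ k) =
      (l.take i).countP (fun x => x ≤ k) + (l.drop i).countP (fun x => x ≤ k) := by
    rw [← List.countP_append, List.take_append_drop]
  have hlen : 0 < (l.drop i).length := by simp; omega
  have hdrop0 : (l.drop i)[0]'hlen = l[i] := by
    simp [List.getElem_drop]
  constructor
  · intro h
    have htake : (l.take i).countP (fun x => x ≤ k) = i := by
      rw [List.countP_eq_length.mpr, List.length_take]
      · omega
      · intro a ha
        have hmem : l[i] ∈ l.drop i := by
          rw [← hdrop0]; exact List.getElem_mem _
        have := hl.rel_of_mem_take_of_mem_drop ha hmem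
        simp only [decide_eq_true_eq]
        omega
    have hd : 0 < (l.drop i).countP (fun x => x ≤ k) := by
      rw [List.countP_pos_iff]
      exact ⟨l[i], by rw [← hdrop0]; exact List.getElem_mem _, by simpa using h⟩
    omega
  · intro h
    by_contra hc
    push_neg at hc
    have hd : (l.drop i).countP (fun x => x ≤ k) = 0 := by
      rw [List.countP_eq_zero]
      intro a ha
      obtain ⟨j, hj, rfl⟩ := List.getElem_of_mem ha
      have hjl : i + j < l.length := by simp at hj; omega
      have h0 : l[i] ≤ l[i + j] := by
        have := hl.rel_get_of_le (a := ⟨i, hi⟩) (b := ⟨i + j, hjl⟩) (by simp)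
        simpa using this
      rw [List.getElem_drop]
      simp only [decide_eq_true_eq]
      omega
    have htl : (l.take i).countP (fun x => x ≤ k) ≤ i := by
      calc (l.take i).countP (fun x => x ≤ k) ≤ (l.take i).length := List.countP_le_length
        _ ≤ i := by rw [List.length_take]; omega
    omega

-- core cycle-lemma style result
lemma core_min_exists (m : ℕ) (hm : 0 < m) (P : ℕ → ℤ) (hP : ∀ j, P (j + m) = P j - 1) :
    ∃ b, b < m ∧ ∀ k, k ≤ m - 1 → P b ≤ P (b + k) := by
  classical
  have hex : ∃ b, b < m ∧ ∀ j, j < m → P b ≤ P j := by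
    obtain ⟨b, hb, hmin⟩ := Finset.exists_min_image (Finset.range m) P ⟨0, Finset.mem_range.2 hm⟩
    exact ⟨b, Finset.mem_range.1 hb, fun j hj => hmin j (Finset.mem_range.2 hj)⟩
  set b := Nat.find hex with hb
  obtain ⟨hbm, hbmin⟩ := Nat.find_spec hex
  refine ⟨b, hbm, fun k hk => ?_⟩
  by_cases hcase : b + k < m
  · exact hbmin _ hcase
  · have hj : b + k - m < b := by omega
    have hjm : b + k - m < m := by omega
    have h1 : P b ≤ P (b + k - m) := hbmin _ hjm
    have h2 : P (b + k - m) ≠ P b := by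
      intro heq
      exact Nat.find_min hex hj ⟨hjm, fun j' hj' => heq ▸ hbmin j' hj'⟩
    have h3 : P (b + k) = P (b + k - m) - 1 := by
      rw [← hP]; congr 1; omega
    omega

lemma core_min_unique (m : ℕ) (P : ℕ → ℤ) (hP : ∀ j, P (j + m) = P j - 1)
    {b1 b2 : ℕ} (h1 : b1 < m ∧ ∀ k, k ≤ m - 1 → P b1 ≤ P (b1 + k))
    (h2 : b2 < m ∧ ∀ k, k ≤ m - 1 → P b2 ≤ P (b2 + k)) : b1 = b2 := by
  by_contra hne
  wlog hlt : b1 < b2 generalizing b1 b2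
  · exact this h2 h1 (Ne.symm hne) (by omega)
  have e1 := h1.2 (b2 - b1) (by omega)
  rw [show b1 + (b2 - b1) = b2 by omega] at e1
  have e2 := h2.2 (b1 + m - b2) (by omega)
  rw [show b2 + (b1 + m - b2) = b1 + m by omega, hP b1] at e2
  omega

open Finset

def goodF {n : ℕ} (f : Fin n → ZMod (n+1)) : Prop :=
  ∀ k, k ≤ n → k ≤ (univ.filter fun i => (f i).val < k).card

section
variable {n : ℕ} (f : Fin n → ZMod (n+1))

/-- number of indices with value `s` (mod `n+1`). -/
def NF (s : ℕ) : ℕ := (univ.filter fun i => f i = (s : ZMod (n+1))).card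

lemma NF_periodic (j : ℕ) : NF f (j + (n+1)) = NF f j := by
  unfold NF
  congr 1
  apply Finset.filter_congr
  intro i _
  simp [Nat.cast_add]

lemma NF_sum_window (j : ℕ) : ∑ t ∈ range (n+1), NF f (j + t) = n := by
  induction j with
  | zero =>
    simp only [Nat.zero_add]
    have := Finset.card_eq_sum_card_fiberwise (s := (univ : Finset (Fin n)))
      (t := range (n+1)) (f := fun i => (f i).val)
      (fun i _ => Finset.mem_range.2 (ZMod.val_lt (f i)))
    rw [Finset.card_univ, Fintype.card_fin] at this
    refine (Finset.sum_congr rfl ?_).trans this.symm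
    intro t ht
    unfold NF
    congr 1
    apply Finset.filter_congr
    intro i _
    have htlt : t < n + 1 := Finset.mem_range.1 ht
    constructor
    · intro h
      show (f i).val = t
      rw [h, ZMod.val_cast_of_lt htlt]
    · intro h
      have h' : (f i).val = t := h
      have h2 := congrArg (Nat.cast : ℕ → ZMod (n+1)) h'
      rwa [ZMod.natCast_val, ZMod.cast_id] at h2
  | succ j ih =>
    have h1 : ∑ t ∈ range (n+1), NF f (j + t) = (∑ t ∈ range n, NF f (j + (t+1))) + NF f (j+0) :=
      Finset.sum_range_succ' _ _
    have h2 : ∑ t ∈ range (n+1), NF f (j + 1 + t)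
        = (∑ t ∈ range n, NF f (j + 1 + t)) + NF f (j + 1 + n) :=
      Finset.sum_range_succ _ _
    have h3 : NF f (j + 1 + n) = NF f j := by
      rw [show j + 1 + n = j + (n+1) by omega]; exact NF_periodic f j
    rw [h2, h3]
    rw [h1] at ih
    simp only [Nat.add_zero] at ih
    have h5 : ∑ t ∈ range n, NF f (j + 1 + t) = ∑ t ∈ range n, NF f (j + (t + 1)) :=
      Finset.sum_congr rfl (fun t _ => by congr 1; omega)
    rw [h5]
    exact ih

/-- partial-sum defect function. -/
def PF' (j : ℕ) : ℤ := (∑ t ∈ range j, (NF f t : ℤ)) - j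

lemma PF'_shift (j : ℕ) : PF' f (j + (n+1)) = PF' f j - 1 := by
  unfold PF'
  have : ∑ t ∈ range (j + (n+1)), (NF f t : ℤ)
      = ∑ t ∈ range j, (NF f t : ℤ) + ∑ t ∈ range (n+1), (NF f (j + t) : ℤ) := by
    rw [Finset.sum_range_add]
  rw [this]
  have := NF_sum_window f j
  have h4 : ∑ t ∈ range (n+1), (NF f (j + t) : ℤ) = (n : ℤ) := by exact_mod_cast this
  rw [h4]
  push_cast
  ring

end

section
variable {n : ℕ} (f : Fin n → ZMod (n+1))

lemma card_shift (c : ZMod (n+1)) (k : ℕ) (hk : k ≤ n) :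
    (univ.filter fun i => (f i + c).val < k).card = ∑ t ∈ range k, NF f ((-c).val + t) := by
  have hbc : ((((-c).val : ℕ)) : ZMod (n+1)) = -c := by
    rw [ZMod.natCast_val, ZMod.cast_id]
  have hcard := Finset.card_eq_sum_card_fiberwise
    (s := univ.filter fun i => (f i + c).val < k) (t := range k)
    (f := fun i => (f i + c).val)
    (fun i hi => Finset.mem_range.2 (Finset.mem_filter.1 hi).2)
  rw [hcard]
  apply Finset.sum_congr rfl
  intro t ht
  have htk : t < k := Finset.mem_range.1 ht
  have htn : t < n + 1 := by omega
  have h1 : (univ.filter fun i => (f i + c).val < k).filter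
      (fun i => (fun i => (f i + c).val) i = t) = univ.filter fun i => (f i + c).val = t := by
    rw [Finset.filter_filter]
    apply Finset.filter_congr
    intro i _
    constructor
    · exact fun h => h.2
    · exact fun h => ⟨by omega, h⟩
  rw [h1]
  unfold NF
  congr 1
  apply Finset.filter_congr
  intro i _
  constructor
  · intro h
    have h' : (f i + c).val = t := h
    have h2 := congrArg (Nat.cast : ℕ → ZMod (n+1)) h'
    rw [ZMod.natCast_val, ZMod.cast_id] at h2
    show f i = _
    push_cast
    rw [hbc]
    linear_combination h2
  · intro h
    have h' : f i = (((-c).val + t : ℕ) : ZMod (n+1)) := h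
    show (f i + c).val = t
    have h3 : f i + c = (t : ZMod (n+1)) := by
      rw [h']
      push_cast
      rw [hbc]
      ring
    rw [h3, ZMod.val_cast_of_lt htn]

lemma good_shift_iff (c : ZMod (n+1)) :
    goodF (fun i => f i + c) ↔
      ∀ k, k ≤ n → PF' f ((-c).val) ≤ PF' f ((-c).val + k) := by
  unfold goodF
  apply forall_congr'
  intro k
  apply imp_congr_right
  intro hk
  rw [card_shift f c k hk]
  have hsum : (∑ t ∈ range k, (NF f ((-c).val + t) : ℤ))
      = PF' f ((-c).val + k) - PF' f ((-c).val) + k := by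
    unfold PF'
    rw [Finset.sum_range_add]
    push_cast
    ring
  constructor
  · intro h
    have h' : (k : ℤ) ≤ ∑ t ∈ range k, (NF f ((-c).val + t) : ℤ) := by exact_mod_cast h
    omega
  · intro h
    have h' : (k : ℤ) ≤ ∑ t ∈ range k, (NF f ((-c).val + t) : ℤ) := by omega
    exact_mod_cast h'

end

lemma exists_unique_good_shift {n : ℕ} (f : Fin n → ZMod (n+1)) :
    ∃! c : ZMod (n+1), goodF (fun i => f i + c) := by
  obtain ⟨b, hbm, hbgood⟩ := core_min_exists (n+1) (by omega) (PF' f) (PF'_shift f)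
  simp only [Nat.add_sub_cancel] at hbgood
  refine ⟨-(b : ZMod (n+1)), ?_, ?_⟩
  · show goodF fun i => f i + -(b : ZMod (n+1))
    rw [good_shift_iff]
    intro k hk
    rw [neg_neg, ZMod.val_cast_of_lt hbm]
    exact hbgood k hk
  · intro c hc
    replace hc : goodF fun i => f i + c := hc
    rw [good_shift_iff] at hc
    have hb' : (-c).val = b := by
      apply core_min_unique (n+1) (PF' f) (PF'_shift f)
      · exact ⟨ZMod.val_lt _, by simpa using hc⟩
      · exact ⟨hbm, by simpa using hbgood⟩
    have : -c = ((b : ℕ) : ZMod (n+1)) := by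
      rw [← hb', ZMod.natCast_val, ZMod.cast_id]
    linear_combination -this
open Finset

lemma goodF_equiv_aux (n : ℕ) :
    Function.Bijective (fun gc : {f : Fin n → ZMod (n+1) // goodF f} × ZMod (n+1) =>
      (fun i => gc.1.1 i - gc.2 : Fin n → ZMod (n+1))) := by
  constructor
  · rintro ⟨⟨g, hg⟩, c⟩ ⟨⟨g', hg'⟩, c'⟩ h
    simp only at h
    have hgc : ∀ i, g i - c = g' i - c' := fun i => congrFun h i
    have h1 : goodF (fun i => (g i - c) + c) := by
      have : (fun i => (g i - c) + c) = g := by funext i; ring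
      rw [this]; exact hg
    have h2 : goodF (fun i => (g i - c) + c') := by
      have : (fun i => (g i - c) + c') = g' := by funext i; rw [hgc i]; ring
      rw [this]; exact hg'
    have hcc : c = c' := (exists_unique_good_shift (fun i => g i - c)).unique h1 h2
    subst hcc
    have : g = g' := by funext i; have := hgc i; linear_combination this
    simp [this]
  · intro f
    obtain ⟨c, hc, -⟩ := exists_unique_good_shift f
    refine ⟨⟨⟨fun i => f i + c, hc⟩, c⟩, ?_⟩
    funext i
    simp

lemma card_goodF_mul (n : ℕ) :
    Nat.card {f : Fin n → ZMod (n+1) // goodF f} * (n+1) = (n+1)^n := by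
  have e := Equiv.ofBijective _ (goodF_equiv_aux n)
  have h1 : Nat.card ({f : Fin n → ZMod (n+1) // goodF f} × ZMod (n+1))
      = Nat.card (Fin n → ZMod (n+1)) := Nat.card_congr e
  rw [Nat.card_prod] at h1
  have h2 : Nat.card (ZMod (n+1)) = n + 1 := by
    rw [Nat.card_eq_fintype_card, ZMod.card]
  have h3 : Nat.card (Fin n → ZMod (n+1)) = (n+1)^n := by
    rw [Nat.card_eq_fintype_card, Fintype.card_fun, ZMod.card, Fintype.card_fin]
  rw [h2, h3] at h1
  exact h1

lemma card_goodF (n : ℕ) :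
    Nat.card {f : Fin n → ZMod (n+1) // goodF f} = (n+1)^(n-1) := by
  have h := card_goodF_mul n
  rcases n with _ | m
  · simpa using h
  · apply Nat.eq_of_mul_eq_mul_right (show 0 < m + 1 + 1 by omega)
    rw [h, ← pow_succ]
    norm_num
open Finset


lemma cnt_sortPF {n : ℕ} (p : Fin n → ℕ) (k : ℕ) :
    (sortPF p).countP (fun x => x ≤ k) = (univ.filter fun i => p i ≤ k).card := by
  rw [countP_sortPF, countP_ofFn]
  congr 1
  simp

lemma isPF_iff {n : ℕ} (p : Fin n → ℕ) :
    IsPF p ↔ (∀ i, 1 ≤ p i) ∧ ∀ k, k ≤ n → k ≤ (univ.filter fun i => p i ≤ k).card := by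
  constructor
  · rintro ⟨h1, h2⟩
    refine ⟨fun i => (h1 i).1, fun k hk => ?_⟩
    rcases k with _ | j
    · exact Nat.zero_le _
    · have hj : j < n := by omega
      have hlen : j < (sortPF p).length := by rw [sortPF_length]; exact hj
      have := (sorted_getD_le_iff (sortPF_sorted p) hlen (j+1)).1 (h2 ⟨j, hj⟩)
      rw [cnt_sortPF] at this
      omega
  · rintro ⟨h1, h2⟩
    have hn := h2 n le_rfl
    have huniv : (univ.filter fun i => p i ≤ n) = univ := by
      apply Finset.eq_univ_of_card
      have hle : (univ.filter fun i => p i ≤ n).card ≤ n :=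
        le_trans (Finset.card_filter_le _ _) (by simp)
      rw [Fintype.card_fin]
      omega
    refine ⟨fun i => ⟨h1 i, ?_⟩, fun i => ?_⟩
    · have : i ∈ (univ.filter fun i => p i ≤ n) := by
        rw [huniv]; exact Finset.mem_univ i
      exact (Finset.mem_filter.1 this).2
    · have hlen : (i : ℕ) < (sortPF p).length := by rw [sortPF_length]; exact i.2
      rw [sorted_getD_le_iff (sortPF_sorted p) hlen, cnt_sortPF]
      have := h2 ((i : ℕ) + 1) i.2
      omega

noncomputable def pfEquiv (n : ℕ) :
    {p : Fin n → ℕ // IsPF p} ≃ {f : Fin n → ZMod (n+1) // goodF f} where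
  toFun := fun ⟨p, hp⟩ => ⟨fun i => ((p i - 1 : ℕ) : ZMod (n+1)), by
    obtain ⟨h1, h2⟩ := (isPF_iff p).1 hp
    have hub : ∀ i, p i ≤ n := fun i => (hp.1 i).2
    intro k hk
    refine le_trans (h2 k hk) (le_of_eq ?_)
    congr 1
    apply Finset.filter_congr
    intro i _
    have hv : (((p i - 1 : ℕ)) : ZMod (n+1)).val = p i - 1 :=
      ZMod.val_cast_of_lt (by have := hub i; omega)
    simp only [hv]
    have := h1 i
    constructor <;> intro h <;> omega⟩
  invFun := fun ⟨f, hf⟩ => ⟨fun i => (f i).val + 1, by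
    rw [isPF_iff]
    refine ⟨fun i => by omega, fun k hk => ?_⟩
    refine le_trans (hf k hk) (le_of_eq ?_)
    have hfe : (univ.filter fun i => (f i).val < k)
        = (univ.filter fun i => (f i).val + 1 ≤ k) := by
      apply Finset.filter_congr
      intro i _
      constructor <;> intro h <;> omega
    rw [hfe]⟩
  left_inv := by
    rintro ⟨p, hp⟩
    apply Subtype.ext
    funext i
    show (((p i - 1 : ℕ)) : ZMod (n+1)).val + 1 = p i
    rw [ZMod.val_cast_of_lt (by have := (hp.1 i).2; omega)]
    have := (hp.1 i).1
    omega
  right_inv := by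
    rintro ⟨f, hf⟩
    apply Subtype.ext
    funext i
    show ((((f i).val + 1 - 1 : ℕ)) : ZMod (n+1)) = f i
    rw [Nat.add_sub_cancel, ZMod.natCast_val, ZMod.cast_id]

/-- The number of parking functions of length `n` is `(n+1)^(n-1)`. -/
theorem num_parking_functions (n : ℕ) :
    Nat.card {p : Fin n → ℕ // IsPF p} = (n + 1) ^ (n - 1) := by
  rw [Nat.card_congr (pfEquiv n), card_goodF]
end

section
/- For n ≥ 1, W_n = (n!/n^{n-1})·Σ_{k=0}^{n-2} n^k/k! satisfies the asymptotic W_n / n^{3/2} → √(2π)/2 as n → ∞. -/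
open Filter
noncomputable def aa (n k : ℕ) : ℝ := (n:ℝ)^k / (k.factorial : ℝ)

lemma aa_hasSum (n : ℕ) : HasSum (aa n) (Real.exp n) := by
  rw [Real.exp_eq_exp_ℝ]
  exact NormedSpace.expSeries_div_hasSum_exp (n:ℝ)

lemma aa_nonneg (n k : ℕ) : 0 ≤ aa n k := by
  unfold aa; positivity

lemma aa_succ (n k : ℕ) : aa n (k+1) = aa n k * (n / (k+1)) := by
  unfold aa
  rw [Nat.factorial_succ]
  push_cast
  field_simp
  ring

lemma aa_pos {n : ℕ} (hn : 1 ≤ n) (k : ℕ) : 0 < aa n k := by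
  unfold aa
  have : (0:ℝ) < (n:ℝ) := by exact_mod_cast hn
  positivity

lemma aa_rel (n k : ℕ) : ((k:ℝ)+1) * aa n (k+1) = n * aa n k := by
  rw [aa_succ]
  have : ((k:ℝ)+1) ≠ 0 := by positivity
  field_simp

lemma aa_base {n : ℕ} (hn : 1 ≤ n) : aa n n = aa n (n-1) := by
  have h := aa_rel n (n-1)
  have he : (n-1)+1 = n := by omega
  rw [he] at h
  have hc : ((n-1:ℕ):ℝ)+1 = (n:ℝ) := by
    push_cast [Nat.cast_sub hn]; ring
  rw [hc] at h
  have hne : (n:ℝ) ≠ 0 := by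
    have : (0:ℝ) < n := by exact_mod_cast hn
    positivity
  exact mul_left_cancel₀ hne h

lemma exp_aux {x : ℝ} (h0 : 0 ≤ x) (h1 : x ≤ 1/2) : 1 ≤ Real.exp (2*x) * (1-x) := by
  have := Real.add_one_le_exp (2*x)
  nlinarith

lemma aa_lower {n : ℕ} (hn : 1 ≤ n) : ∀ j, j + 1 ≤ n → aa n (n-1-j) ≤ aa n (n+j) := by
  intro j
  induction j with
  | zero => intro _; simp [aa_base hn]
  | succ j ih =>
    intro hj
    have ihj := ih (by omega)
    have h1 : (((n-2-j : ℕ) :ℝ)+1) * aa n ((n-2-j)+1) = n * aa n (n-2-j) := aa_rel n _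
    have he : (n-2-j)+1 = n-1-j := by omega
    rw [he] at h1
    have h2 : (((n+j : ℕ):ℝ)+1) * aa n ((n+j)+1) = n * aa n (n+j) := aa_rel n _
    have he2 : (n+j)+1 = n+(j+1) := by omega
    rw [he2] at h2
    push_cast at h2
    have hc1 : ((n-2-j : ℕ):ℝ) = (n:ℝ) - 2 - j := by
      push_cast [Nat.cast_sub (show j ≤ n - 2 by omega), Nat.cast_sub (show 2 ≤ n by omega)]
      ring
    rw [hc1] at h1
    have hg : n-1-(j+1) = n-2-j := by omega
    rw [hg]
    set x := aa n (n-2-j) with hxd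
    set y := aa n (n-1-j) with hyd
    set u := aa n (n+j) with hud
    set v := aa n (n+(j+1)) with hvd
    have hx := aa_pos hn (n-2-j)
    have hu := aa_pos hn (n+j)
    have hnpos : (0:ℝ) < n := by exact_mod_cast hn
    have hA : (0:ℝ) < (n:ℝ)-2-(j:ℝ)+1 := by
      have : (j:ℝ) + 2 ≤ (n:ℝ) := by exact_mod_cast hj
      linarith
    have hB : (0:ℝ) < (n:ℝ)+(j:ℝ)+1 := by positivity
    have hkey : ((n:ℝ)-2-j+1) * ((n:ℝ)+j+1) ≤ (n:ℝ)*(n:ℝ) := by nlinarith [sq_nonneg ((j:ℝ)+1)]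
    have l1 : (n:ℝ)*(((n:ℝ)+j+1)*x) = (((n:ℝ)-2-j+1)*((n:ℝ)+j+1))*y := by
      linear_combination (-((n:ℝ)+(j:ℝ)+1)) * h1
    have l2 : (((n:ℝ)-2-j+1)*((n:ℝ)+j+1))*y ≤ ((n:ℝ)*(n:ℝ))*u := by
      have p1 : (((n:ℝ)-2-j+1)*((n:ℝ)+j+1))*y ≤ (((n:ℝ)-2-j+1)*((n:ℝ)+j+1))*u :=
        mul_le_mul_of_nonneg_left ihj (by positivity)
      have p2 : (((n:ℝ)-2-j+1)*((n:ℝ)+j+1))*u ≤ ((n:ℝ)*(n:ℝ))*u :=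
        mul_le_mul_of_nonneg_right hkey hu.le
      linarith
    have l3 : ((n:ℝ)*(n:ℝ))*u = (n:ℝ)*(((n:ℝ)+j+1)*v) := by
      linear_combination (n:ℝ) * h2.symm
    have : (n:ℝ)*(((n:ℝ)+j+1)*x) ≤ (n:ℝ)*(((n:ℝ)+j+1)*v) := by linarith
    have := le_of_mul_le_mul_left this hnpos
    exact le_of_mul_le_mul_left this hB

lemma aa_upper {n : ℕ} (hn : 1 ≤ n) : ∀ j, 2*j ≤ n →
    aa n (n+j) ≤ Real.exp (2*(j:ℝ)^3/(n:ℝ)^2) * aa n (n-1-j) := by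
  intro j
  induction j with
  | zero => intro _; simp [aa_base hn]
  | succ j ih =>
    intro hj
    have ihj := ih (by omega)
    have h1 : (((n-2-j : ℕ) :ℝ)+1) * aa n ((n-2-j)+1) = n * aa n (n-2-j) := aa_rel n _
    have he : (n-2-j)+1 = n-1-j := by omega
    rw [he] at h1
    have h2 : (((n+j : ℕ):ℝ)+1) * aa n ((n+j)+1) = n * aa n (n+j) := aa_rel n _
    have he2 : (n+j)+1 = n+(j+1) := by omega
    rw [he2] at h2
    push_cast at h2
    have hc1 : ((n-2-j : ℕ):ℝ) = (n:ℝ) - 2 - j := by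
      push_cast [Nat.cast_sub (show j ≤ n - 2 by omega), Nat.cast_sub (show 2 ≤ n by omega)]
      ring
    rw [hc1] at h1
    have hg : n-1-(j+1) = n-2-j := by omega
    rw [hg]
    push_cast
    set x := aa n (n-2-j) with hxd
    set y := aa n (n-1-j) with hyd
    set u := aa n (n+j) with hud
    set v := aa n (n+(j+1)) with hvd
    have hx := aa_pos hn (n-2-j)
    have hy := aa_pos hn (n-1-j)
    have hu := aa_pos hn (n+j)
    have hv := aa_pos hn (n+(j+1))
    have hnpos : (0:ℝ) < n := by exact_mod_cast hn
    have hA : (0:ℝ) < (n:ℝ)-2-(j:ℝ)+1 := by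
      have : (j:ℝ) + 2 ≤ (n:ℝ) := by exact_mod_cast (show j+2 ≤ n by omega)
      linarith
    have hB : (0:ℝ) < (n:ℝ)+(j:ℝ)+1 := by positivity
    set E := Real.exp (2*(j:ℝ)^3/(n:ℝ)^2) with hEd
    set F := Real.exp (2*((j:ℝ)+1)^2/(n:ℝ)^2) with hFd
    set G := Real.exp (2*((j:ℝ)+1)^3/(n:ℝ)^2) with hGd
    have hEF : E * F ≤ G := by
      rw [hEd, hFd, hGd, ← Real.exp_add]
      apply Real.exp_le_exp.mpr
      rw [← add_div, div_le_div_iff₀ (by positivity) (by positivity)]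
      nlinarith [sq_nonneg (j:ℝ), (show (0:ℝ) ≤ (j:ℝ) from Nat.cast_nonneg j), sq_nonneg ((n:ℝ))]
    have hEpos : 0 < E := Real.exp_pos _
    have hFpos : 0 < F := Real.exp_pos _
    -- n² ≤ F * (A*B), A*B = n² - (j+1)²
    have hsq : ((j:ℝ)+1)^2/(n:ℝ)^2 ≤ 1/2 := by
      rw [div_le_iff₀ (by positivity)]
      have : 2*((j:ℝ)+1) ≤ (n:ℝ) := by exact_mod_cast hj
      nlinarith
    have hF2 : (n:ℝ)^2 ≤ F * (((n:ℝ)-2-j+1) * ((n:ℝ)+j+1)) := by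
      have h0 : (0:ℝ) ≤ ((j:ℝ)+1)^2/(n:ℝ)^2 := by positivity
      have := exp_aux h0 hsq
      have hFd2 : F = Real.exp (2*(((j:ℝ)+1)^2/(n:ℝ)^2)) := by rw [hFd]; ring_nf
      rw [← hFd2] at this
      have hmul := mul_le_mul_of_nonneg_left this (le_of_lt (show (0:ℝ) < (n:ℝ)^2 by positivity))
      have hid : (n:ℝ)^2 * (F * (1 - ((j:ℝ)+1)^2/(n:ℝ)^2)) = F * ((n:ℝ)^2 - ((j:ℝ)+1)^2) := by
        field_simp
      rw [mul_one, hid] at hmul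
      have : ((n:ℝ)-2-j+1) * ((n:ℝ)+j+1) = (n:ℝ)^2 - ((j:ℝ)+1)^2 := by ring
      rw [this]
      exact hmul
    -- chain
    have c1 : ((n:ℝ)+j+1) * v ≤ (n:ℝ) * (E * y) := by
      rw [h2]
      exact mul_le_mul_of_nonneg_left ihj hnpos.le
    have c2 : (((n:ℝ)-2-j+1) * ((n:ℝ)+j+1)) * v ≤ E * ((n:ℝ) * ((n:ℝ) * x)) := by
      have := mul_le_mul_of_nonneg_left c1 hA.le
      calc (((n:ℝ)-2-j+1) * ((n:ℝ)+j+1)) * v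
          = ((n:ℝ)-2-j+1) * (((n:ℝ)+j+1) * v) := by ring
        _ ≤ ((n:ℝ)-2-j+1) * ((n:ℝ) * (E * y)) := this
        _ = E * ((n:ℝ) * (((n:ℝ)-2-j+1) * y)) := by ring
        _ = E * ((n:ℝ) * ((n:ℝ) * x)) := by rw [h1]
    have c3 : E * ((n:ℝ) * ((n:ℝ) * x)) ≤ E * (F * ((((n:ℝ)-2-j+1) * ((n:ℝ)+j+1)) * x)) := by
      apply mul_le_mul_of_nonneg_left _ hEpos.le
      have := mul_le_mul_of_nonneg_right hF2 hx.le
      calc (n:ℝ) * ((n:ℝ) * x) = (n:ℝ)^2 * x := by ring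
        _ ≤ (F * (((n:ℝ)-2-j+1) * ((n:ℝ)+j+1))) * x := this
        _ = F * ((((n:ℝ)-2-j+1) * ((n:ℝ)+j+1)) * x) := by ring
    have c4 : (((n:ℝ)-2-j+1) * ((n:ℝ)+j+1)) * v ≤ (((n:ℝ)-2-j+1) * ((n:ℝ)+j+1)) * ((E*F) * x) := by
      calc (((n:ℝ)-2-j+1) * ((n:ℝ)+j+1)) * v ≤ E * (F * ((((n:ℝ)-2-j+1) * ((n:ℝ)+j+1)) * x)) :=
            le_trans c2 c3
        _ = (((n:ℝ)-2-j+1) * ((n:ℝ)+j+1)) * ((E*F) * x) := by ring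
    have c5 : v ≤ (E*F) * x := le_of_mul_le_mul_left c4 (by positivity)
    calc v ≤ (E*F)*x := c5
      _ ≤ G * x := mul_le_mul_of_nonneg_right hEF hx.le

lemma aa_decay {n : ℕ} (hn : 1 ≤ n) : ∀ j : ℕ,
    aa n (n+j) * (2*(n:ℝ) + (j:ℝ)*((j:ℝ)+1)) ≤ 2*(n:ℝ) * aa n n := by
  intro j
  induction j with
  | zero => push_cast; simp; exact le_of_eq (by ring)
  | succ j ih =>
    have h2 : (((n+j : ℕ):ℝ)+1) * aa n ((n+j)+1) = n * aa n (n+j) := aa_rel n _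
    have he2 : (n+j)+1 = n+(j+1) := by omega
    rw [he2] at h2
    push_cast at h2 ⊢
    set u := aa n (n+j) with hud
    set v := aa n (n+(j+1)) with hvd
    have hu := aa_pos hn (n+j)
    have hv := aa_pos hn (n+(j+1))
    have hnpos : (0:ℝ) < n := by exact_mod_cast hn
    have hB : (0:ℝ) < (n:ℝ)+(j:ℝ)+1 := by positivity
    have hj0 : (0:ℝ) ≤ (j:ℝ) := Nat.cast_nonneg j
    -- B * (v * C') = (n*u)*C' ≤ B * (u * C) ≤ B * (2n aa_n)
    have hpoly : (n:ℝ) * (2*(n:ℝ) + ((j:ℝ)+1)*((j:ℝ)+2)) ≤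
        ((n:ℝ)+(j:ℝ)+1) * (2*(n:ℝ) + (j:ℝ)*((j:ℝ)+1)) := by
      nlinarith [mul_nonneg (mul_nonneg hj0 hj0) hj0, sq_nonneg (j:ℝ)]
    have step1 : ((n:ℝ)+(j:ℝ)+1) * (v * (2*(n:ℝ) + ((j:ℝ)+1)*((j:ℝ)+2))) =
        ((n:ℝ)*u) * (2*(n:ℝ) + ((j:ℝ)+1)*((j:ℝ)+2)) := by
      linear_combination (2*(n:ℝ) + ((j:ℝ)+1)*((j:ℝ)+2)) * h2
    have step2 : ((n:ℝ)*u) * (2*(n:ℝ) + ((j:ℝ)+1)*((j:ℝ)+2)) ≤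
        ((n:ℝ)+(j:ℝ)+1) * (u * (2*(n:ℝ) + (j:ℝ)*((j:ℝ)+1))) := by
      have := mul_le_mul_of_nonneg_right hpoly hu.le
      calc ((n:ℝ)*u) * (2*(n:ℝ) + ((j:ℝ)+1)*((j:ℝ)+2))
          = ((n:ℝ) * (2*(n:ℝ) + ((j:ℝ)+1)*((j:ℝ)+2))) * u := by ring
        _ ≤ (((n:ℝ)+(j:ℝ)+1) * (2*(n:ℝ) + (j:ℝ)*((j:ℝ)+1))) * u := this
        _ = ((n:ℝ)+(j:ℝ)+1) * (u * (2*(n:ℝ) + (j:ℝ)*((j:ℝ)+1))) := by ring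
    have step3 : ((n:ℝ)+(j:ℝ)+1) * (u * (2*(n:ℝ) + (j:ℝ)*((j:ℝ)+1))) ≤
        ((n:ℝ)+(j:ℝ)+1) * (2*(n:ℝ) * aa n n) := mul_le_mul_of_nonneg_left ih hB.le
    have : ((n:ℝ)+(j:ℝ)+1) * (v * (2*(n:ℝ) + ((j:ℝ)+1)*((j:ℝ)+2))) ≤
        ((n:ℝ)+(j:ℝ)+1) * (2*(n:ℝ) * aa n n) := by
      rw [step1]; exact le_trans step2 step3
    have := le_of_mul_le_mul_left this hB
    calc v * (2*(n:ℝ) + ((j:ℝ)+1)*((j:ℝ)+1+1)) 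
        = v * (2*(n:ℝ) + ((j:ℝ)+1)*((j:ℝ)+2)) := by ring
      _ ≤ 2*(n:ℝ) * aa n n := this

lemma aa_decay2 {n : ℕ} (hn : 1 ≤ n) {j : ℕ} (hj : 1 ≤ j) :
    aa n (n+j) ≤ 2*(n:ℝ) * aa n n / (j:ℝ)^2 := by
  have h := aa_decay hn j
  have hu := aa_pos hn (n+j)
  have hj0 : (1:ℝ) ≤ (j:ℝ) := by exact_mod_cast hj
  have hnpos : (0:ℝ) < n := by exact_mod_cast hn
  rw [le_div_iff₀ (by positivity)]
  calc aa n (n+j) * (j:ℝ)^2 ≤ aa n (n+j) * (2*(n:ℝ) + (j:ℝ)*((j:ℝ)+1)) := by nlinarith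
    _ ≤ 2*(n:ℝ) * aa n n := h

lemma telescope {J : ℕ} (hJ : 1 ≤ J) : ∀ m : ℕ,
    ∑ j ∈ Finset.Ico J m, (1:ℝ)/(j:ℝ)^2 ≤ 2/(J:ℝ) := by
  have hJ0 : (0:ℝ) < J := by exact_mod_cast hJ
  intro m
  rcases le_or_gt m J with h | h
  · rw [Finset.Ico_eq_empty (by omega)]
    simp [le_div_iff₀ hJ0]
  · have key : ∀ m, J ≤ m → ∑ j ∈ Finset.Ico J m, (1:ℝ)/(j:ℝ)^2 ≤ 2/(J:ℝ) - 2/(m:ℝ) := by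
      intro m hm
      induction m, hm using Nat.le_induction with
      | base => simp
      | succ m hm ih =>
        rw [Finset.sum_Ico_succ_top hm]
        have hm1 : (1:ℝ) ≤ (m:ℝ) := by exact_mod_cast le_trans hJ hm
        have : (1:ℝ)/(m:ℝ)^2 ≤ 2/(m:ℝ) - 2/((m:ℝ)+1) := by
          rw [div_sub_div _ _ (by positivity) (by positivity), div_le_div_iff₀ (by positivity) (by positivity)]
          nlinarith
        push_cast
        linarith
    have h2 : (0:ℝ) < m := by
      have : (0:ℝ) < (J:ℝ) := hJ0
      exact_mod_cast lt_of_le_of_lt (Nat.zero_le J) h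
    have := key m h.le
    have : 2/(m:ℝ) ≥ 0 := by positivity
    linarith [key m h.le]

lemma aa_geom {n : ℕ} (hn : 1 ≤ n) : ∀ k : ℕ, aa n (2*n+k) ≤ aa n (2*n) * (1/2)^k := by
  intro k
  induction k with
  | zero => simp
  | succ k ih =>
    have h2 : (((2*n+k : ℕ):ℝ)+1) * aa n ((2*n+k)+1) = n * aa n (2*n+k) := aa_rel n _
    push_cast at h2
    have hB : (0:ℝ) < 2*(n:ℝ)+(k:ℝ)+1 := by positivity
    have hv := aa_pos hn ((2*n+k)+1)
    have hu := aa_pos hn (2*n+k)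
    have hnpos : (0:ℝ) < n := by exact_mod_cast hn
    have hhalf : aa n ((2*n+k)+1) ≤ aa n (2*n+k) * (1/2) := by
      rw [show aa n ((2*n+k)+1) = (n:ℝ) * aa n (2*n+k) / (2*(n:ℝ)+(k:ℝ)+1) from by
        field_simp; linarith [h2]]
      rw [div_le_iff₀ hB]
      nlinarith
    have he : 2*n+(k+1) = (2*n+k)+1 := by omega
    rw [he]
    calc aa n ((2*n+k)+1) ≤ aa n (2*n+k) * (1/2) := hhalf
      _ ≤ (aa n (2*n) * (1/2)^k) * (1/2) := by
          apply mul_le_mul_of_nonneg_right ih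
          norm_num
      _ = aa n (2*n) * (1/2)^(k+1) := by ring

noncomputable def SS (n : ℕ) : ℝ := ∑ k ∈ Finset.range n, aa n k

lemma SS_le_exp (n : ℕ) : SS n ≤ Real.exp n :=
  sum_le_hasSum _ (fun i _ => aa_nonneg n i) (aa_hasSum n)

lemma tail_hasSum (n : ℕ) :
    HasSum (fun m => aa n (m + 2*n)) (Real.exp n - ∑ k ∈ Finset.range (2*n), aa n k) := by
  apply (hasSum_nat_add_iff (f := aa n) (2*n)).mpr
  rw [sub_add_cancel]
  exact aa_hasSum n

lemma tail_nonneg (n : ℕ) : 0 ≤ Real.exp n - ∑ k ∈ Finset.range (2*n), aa n k :=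
  (tail_hasSum n).nonneg (fun m => aa_nonneg n _)

lemma tail_le {n : ℕ} (hn : 1 ≤ n) :
    Real.exp n - ∑ k ∈ Finset.range (2*n), aa n k ≤ 2 * aa n (2*n) := by
  have hsum : HasSum (fun m : ℕ => aa n (2*n) * (1/2:ℝ)^m) (aa n (2*n) * 2) := by
    exact hasSum_geometric_two.mul_left (aa n (2*n))
  have := hasSum_le (fun m => by
      have := aa_geom hn m
      rw [show 2*n+m = m+2*n from by omega] at this
      exact this) (tail_hasSum n) hsum
  linarith [this]

lemma aa_single_le (n k : ℕ) : aa n k ≤ Real.exp n :=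
  le_hasSum (aa_hasSum n) k (fun j _ => aa_nonneg n j)

lemma aa_2n_le {n : ℕ} (hn : 1 ≤ n) : aa n (2*n) ≤ Real.exp (2*n) / 4^n := by
  have h1 : aa (2*n) (2*n) ≤ Real.exp ((2*n : ℕ)) := aa_single_le (2*n) (2*n)
  have h2 : aa n (2*n) * 4^n = aa (2*n) (2*n) := by
    unfold aa
    rw [div_mul_eq_mul_div]
    congr 1
    push_cast
    rw [show ((4:ℝ))^n = (2^2:ℝ)^n from by norm_num, ← pow_mul,
        show (2*(n:ℝ))^(2*n) = 2^(2*n) * (n:ℝ)^(2*n) from by rw [mul_pow]]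
    ring
  have h4 : (0:ℝ) < 4^n := by positivity
  rw [le_div_iff₀ h4, h2]
  convert h1 using 2
  · rfl
  push_cast
  ring

lemma aa_n_small : ∀ᶠ n : ℕ in atTop, aa n n ≤ Real.exp n / Real.sqrt n := by
  have h := Stirling.tendsto_stirlingSeq_sqrt_pi
  have hpi : (0:ℝ) < Real.sqrt Real.pi / 2 := by positivity
  have hev : ∀ᶠ n : ℕ in atTop, Real.sqrt Real.pi / 2 < Stirling.stirlingSeq n := by
    apply h.eventually (eventually_gt_nhds ?_)
    have : (0:ℝ) < Real.sqrt Real.pi := by positivity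
    linarith
  filter_upwards [hev, eventually_ge_atTop 1] with n hs hn
  have hnpos : (0:ℝ) < n := by exact_mod_cast hn
  have hc : (0:ℝ) < Real.sqrt (2*(n:ℝ)) * ((n:ℝ)/Real.exp 1)^n := by positivity
  rw [Stirling.stirlingSeq, lt_div_iff₀ hc] at hs
  -- hs : √π/2 * (√(2n) * (n/e)^n) < n!
  have hfact : (0:ℝ) < (n.factorial : ℝ) := by exact_mod_cast n.factorial_pos
  have haa : aa n n = (n:ℝ)^n / (n.factorial : ℝ) := rfl
  rw [haa, div_le_div_iff₀ hfact (by positivity)]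
  -- goal : n^n * √n ≤ exp n * n!
  have hne : ((n:ℝ)/Real.exp 1)^n = (n:ℝ)^n / Real.exp n := by
    rw [div_pow, Real.exp_one_pow]
  have key : Real.exp n * (Real.sqrt Real.pi / 2 * (Real.sqrt (2*(n:ℝ)) * ((n:ℝ)/Real.exp 1)^n))
      = (Real.sqrt Real.pi * Real.sqrt 2 / 2) * ((n:ℝ)^n * Real.sqrt n) := by
    rw [hne, Real.sqrt_mul (by norm_num : (0:ℝ) ≤ 2)]
    have hexp : Real.exp (n:ℝ) ≠ 0 := (Real.exp_pos _).ne'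
    field_simp
  have h2 : (1:ℝ) ≤ Real.sqrt Real.pi * Real.sqrt 2 / 2 := by
    rw [← Real.sqrt_mul (Real.pi_pos.le)]
    have : (4:ℝ) ≤ Real.pi * 2 := by nlinarith [Real.pi_gt_three]
    have := Real.sqrt_le_sqrt this
    rw [show Real.sqrt 4 = 2 from by
      rw [show (4:ℝ) = 2^2 by norm_num, Real.sqrt_sq (by norm_num : (0:ℝ) ≤ 2)]] at this
    linarith
  have hmul := mul_le_mul_of_nonneg_left hs.le (Real.exp_pos (n:ℝ)).le
  rw [key] at hmul
  calc (n:ℝ)^n * Real.sqrt n ≤ (Real.sqrt Real.pi * Real.sqrt 2 / 2) * ((n:ℝ)^n * Real.sqrt n) := by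
        nlinarith [Real.sqrt_nonneg (n:ℝ), pow_pos hnpos n, mul_pos (pow_pos hnpos n) (Real.sqrt_pos.mpr hnpos)]
    _ ≤ Real.exp n * (n.factorial : ℝ) := hmul

lemma decomposition {n : ℕ} (hn : 1 ≤ n) :
    Real.exp n - 2 * SS n =
      (∑ j ∈ Finset.range n, (aa n (n+j) - aa n (n-1-j)))
        + (Real.exp n - ∑ k ∈ Finset.range (2*n), aa n k) := by
  have hsplit : ∑ k ∈ Finset.range n, aa n k + ∑ k ∈ Finset.Ico n (2*n), aa n k
      = ∑ k ∈ Finset.range (2*n), aa n k :=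
    Finset.sum_range_add_sum_Ico _ (by omega)
  have hIco : ∑ k ∈ Finset.Ico n (2*n), aa n k = ∑ j ∈ Finset.range n, aa n (n+j) := by
    rw [Finset.sum_Ico_eq_sum_range, show 2*n - n = n from by omega]
  have hrefl : ∑ j ∈ Finset.range n, aa n (n-1-j) = SS n :=
    Finset.sum_range_reflect (aa n) n
  rw [Finset.sum_sub_distrib, hIco.symm, hrefl]
  unfold SS at *
  linarith [hsplit]

lemma invsqrt_tendsto : Tendsto (fun n : ℕ => 1/Real.sqrt n) atTop (nhds 0) := by
  have h0 : Tendsto (fun x : ℝ => x ^ (-(1/2):ℝ)) atTop (nhds 0) :=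
    tendsto_rpow_neg_atTop (by norm_num)
  have h := h0.comp tendsto_natCast_atTop_atTop
  apply h.congr
  intro n
  show ((n:ℝ)) ^ (-(1/2):ℝ) = 1/Real.sqrt n
  rw [Real.rpow_neg (Nat.cast_nonneg n), ← Real.sqrt_eq_rpow, one_div]

set_option maxHeartbeats 1000000 in
lemma half : Tendsto (fun n : ℕ => SS n / Real.exp n) atTop (nhds (1/2)) := by
  rw [Metric.tendsto_nhds]
  intro ε hε
  set K : ℕ := max 1 ⌈(16:ℝ)/ε⌉₊ with hKdef
  have hK1 : 1 ≤ K := le_max_left _ _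
  have hKpos : (0:ℝ) < K := by exact_mod_cast hK1
  have hKε : (16:ℝ)/ε ≤ K := by
    calc (16:ℝ)/ε ≤ (⌈(16:ℝ)/ε⌉₊ : ℝ) := Nat.le_ceil _
      _ ≤ K := by exact_mod_cast le_max_right _ _
  have hK4 : 4/(K:ℝ) ≤ ε/4 := by
    rw [div_le_div_iff₀ hKpos (by norm_num)]
    rw [div_le_iff₀ hε] at hKε
    linarith
  -- J
  set J : ℕ → ℕ := fun n => K * (Nat.sqrt n + 1) with hJdef
  have hJ1 : ∀ n, 1 ≤ J n := fun n => by
    have : 1 ≤ Nat.sqrt n + 1 := by omega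
    calc 1 = 1*1 := by norm_num
      _ ≤ K * (Nat.sqrt n + 1) := Nat.mul_le_mul hK1 this
  -- E2 : 2 * J n ≤ n eventually
  have hE2 : ∀ᶠ n : ℕ in atTop, 2 * J n ≤ n := by
    rw [eventually_atTop]
    refine ⟨(4*K+2)*(4*K+2), fun n hn => ?_⟩
    have hs : 4*K+2 ≤ Nat.sqrt n := by
      calc 4*K+2 = Nat.sqrt ((4*K+2)*(4*K+2)) := (Nat.sqrt_eq _).symm
        _ ≤ Nat.sqrt n := Nat.sqrt_le_sqrt hn
    set s := Nat.sqrt n with hsd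
    calc 2 * (K * (s+1)) = 2*K*(s+1) := by ring
      _ ≤ 2*K*(2*s) := Nat.mul_le_mul_left _ (by omega)
      _ = (4*K)*s := by ring
      _ ≤ s*s := Nat.mul_le_mul_right _ (by omega)
      _ ≤ n := Nat.sqrt_le n
  -- E3 : exp(2J³/n²) - 1 ≤ ε/4 eventually
  have hJb : ∀ᶠ n : ℕ in atTop, 2*((J n : ℕ):ℝ)^3/(n:ℝ)^2 ≤ 16*(K:ℝ)^3/Real.sqrt n := by
    filter_upwards [eventually_ge_atTop 1] with n hn
    have hnpos : (0:ℝ) < n := by exact_mod_cast hn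
    have hsq : (0:ℝ) < Real.sqrt n := Real.sqrt_pos.mpr hnpos
    have hsq1 : (1:ℝ) ≤ Real.sqrt n := by
      rw [show (1:ℝ) = Real.sqrt 1 from (Real.sqrt_one).symm]
      exact Real.sqrt_le_sqrt (by exact_mod_cast hn)
    have hJle : ((J n : ℕ):ℝ) ≤ (K:ℝ) * (2 * Real.sqrt n) := by
      rw [hJdef]
      push_cast
      have h1 : ((Nat.sqrt n : ℕ):ℝ) ≤ Real.sqrt n := Real.nat_sqrt_le_real_sqrt
      nlinarith
    have hJn : (0:ℝ) ≤ ((J n : ℕ):ℝ) := Nat.cast_nonneg _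
    have hcube : ((J n : ℕ):ℝ)^3 ≤ ((K:ℝ) * (2*Real.sqrt n))^3 :=
      pow_le_pow_left₀ hJn hJle 3
    have hid : ((K:ℝ) * (2*Real.sqrt n))^3 = 8*(K:ℝ)^3 * (Real.sqrt n)^3 := by ring
    rw [div_le_div_iff₀ (by positivity) hsq]
    have hs2 : (Real.sqrt n)^2 = (n:ℝ) := Real.sq_sqrt hnpos.le
    calc 2*((J n : ℕ):ℝ)^3 * Real.sqrt n ≤ 2*(8*(K:ℝ)^3 * (Real.sqrt n)^3) * Real.sqrt n := by
          rw [← hid]; nlinarith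
      _ = 16*(K:ℝ)^3 * ((Real.sqrt n)^2 * (Real.sqrt n)^2) := by ring
      _ = 16*(K:ℝ)^3 * (n:ℝ)^2 := by rw [hs2]; ring
  have hlim0 : Tendsto (fun n : ℕ => 2*((J n : ℕ):ℝ)^3/(n:ℝ)^2) atTop (nhds 0) := by
    apply squeeze_zero' (Eventually.of_forall (fun n => by positivity)) hJb
    have := invsqrt_tendsto.const_mul (16*(K:ℝ)^3)
    simpa [div_eq_mul_inv] using this
  have hE3 : ∀ᶠ n : ℕ in atTop,
      Real.exp (2*((J n : ℕ):ℝ)^3/(n:ℝ)^2) - 1 ≤ ε/4 := by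
    have hcont : Tendsto (fun n : ℕ => Real.exp (2*((J n : ℕ):ℝ)^3/(n:ℝ)^2) - 1) atTop
        (nhds 0) := by
      have := ((Real.continuous_exp.tendsto 0).comp hlim0).sub tendsto_const_nhds (g := fun _ => (1:ℝ))
      simpa using this
    exact hcont.eventually (eventually_le_nhds (by positivity))
  -- E4 : tail factor
  have hE4 : ∀ᶠ n : ℕ in atTop, 2*(Real.exp 1/4)^n ≤ ε/4 := by
    have hlt : Real.exp 1 / 4 < 1 := by
      have := Real.exp_one_lt_d9
      norm_num at this ⊢
      linarith
    have h0 : (0:ℝ) ≤ Real.exp 1/4 := by positivity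
    have := (tendsto_pow_atTop_nhds_zero_of_lt_one h0 hlt).const_mul 2
    simp only [mul_zero] at this
    exact this.eventually (eventually_le_nhds (by positivity))
  filter_upwards [aa_n_small, hE2, hE3, hE4, eventually_ge_atTop 1] with n h1 h2 h3 h4 hn1
  -- main computation
  have hnpos : (0:ℝ) < n := by exact_mod_cast hn1
  have hepos : (0:ℝ) < Real.exp n := Real.exp_pos _
  have hJn : J n ≤ n := by omega
  have hsqpos : (0:ℝ) < Real.sqrt n := Real.sqrt_pos.mpr hnpos
  -- decomposition
  have hdec := decomposition hn1
  set D := ∑ j ∈ Finset.range n, (aa n (n+j) - aa n (n-1-j)) with hDdef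
  set T := Real.exp n - ∑ k ∈ Finset.range (2*n), aa n k with hTdef
  have hDnonneg : 0 ≤ D := by
    apply Finset.sum_nonneg
    intro j hj
    rw [Finset.mem_range] at hj
    have := aa_lower hn1 j (by omega)
    linarith
  have hTnonneg : 0 ≤ T := tail_nonneg n
  -- T bound
  have hT : T ≤ (ε/4) * Real.exp n := by
    have t1 := tail_le hn1
    have t2 := aa_2n_le hn1
    have t3 : Real.exp ((2*n : ℕ):ℝ) / 4^n = (Real.exp 1/4)^n * Real.exp n := by
      push_cast
      rw [show (2:ℝ)*n = n + n by ring, Real.exp_add, div_pow, ← Real.exp_one_pow]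
      field_simp
    have t4 : T ≤ 2*((Real.exp 1/4)^n * Real.exp n) := by
      calc T ≤ 2 * aa n (2*n) := t1
        _ ≤ 2 * (Real.exp ((2*n:ℕ):ℝ) / 4^n) := by
            have := aa_2n_le hn1
            push_cast at this ⊢
            linarith
        _ = 2*((Real.exp 1/4)^n * Real.exp n) := by rw [t3]
    calc T ≤ 2*((Real.exp 1/4)^n * Real.exp n) := t4
      _ = (2*(Real.exp 1/4)^n) * Real.exp n := by ring
      _ ≤ (ε/4) * Real.exp n := mul_le_mul_of_nonneg_right h4 hepos.le
  -- split D
  have hsplit : D = (∑ j ∈ Finset.range (J n), (aa n (n+j) - aa n (n-1-j)))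
      + (∑ j ∈ Finset.Ico (J n) n, (aa n (n+j) - aa n (n-1-j))) :=
    (Finset.sum_range_add_sum_Ico _ hJn).symm
  -- small part
  set E := Real.exp (2*((J n : ℕ):ℝ)^3/(n:ℝ)^2) with hEdef
  have hE1' : 1 ≤ E := Real.one_le_exp (by positivity)
  have hsmall : ∑ j ∈ Finset.range (J n), (aa n (n+j) - aa n (n-1-j))
      ≤ (E - 1) * Real.exp n := by
    have hterm : ∀ j ∈ Finset.range (J n),
        aa n (n+j) - aa n (n-1-j) ≤ (E-1) * aa n (n-1-j) := by
      intro j hj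
      rw [Finset.mem_range] at hj
      have h2j : 2*j ≤ n := by omega
      have hup := aa_upper hn1 j h2j
      have hmono : Real.exp (2*(j:ℝ)^3/(n:ℝ)^2) ≤ E := by
        rw [hEdef]
        apply Real.exp_le_exp.mpr
        apply div_le_div_of_nonneg_right ?_ (by positivity)
        have : (j:ℝ) ≤ ((J n : ℕ):ℝ) := by exact_mod_cast hj.le
        have h0j : (0:ℝ) ≤ (j:ℝ) := Nat.cast_nonneg _
        nlinarith [pow_le_pow_left₀ h0j this 3]
      have haj := (aa_pos hn1 (n-1-j)).le
      nlinarith [mul_le_mul_of_nonneg_right hmono haj]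
    calc ∑ j ∈ Finset.range (J n), (aa n (n+j) - aa n (n-1-j))
        ≤ ∑ j ∈ Finset.range (J n), (E-1) * aa n (n-1-j) := Finset.sum_le_sum hterm
      _ = (E-1) * ∑ j ∈ Finset.range (J n), aa n (n-1-j) := by rw [Finset.mul_sum]
      _ ≤ (E-1) * Real.exp n := by
          apply mul_le_mul_of_nonneg_left ?_ (by linarith)
          calc ∑ j ∈ Finset.range (J n), aa n (n-1-j)
              ≤ ∑ j ∈ Finset.range n, aa n (n-1-j) := by
                apply Finset.sum_le_sum_of_subset_of_nonneg
                · exact Finset.range_subset_range.mpr hJn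
                · intro i _ _; exact aa_nonneg n _
            _ = SS n := Finset.sum_range_reflect (aa n) n
            _ ≤ Real.exp n := SS_le_exp n
  have hsmall2 : ∑ j ∈ Finset.range (J n), (aa n (n+j) - aa n (n-1-j)) ≤ (ε/4) * Real.exp n := by
    apply le_trans hsmall
    apply mul_le_mul_of_nonneg_right _ hepos.le
    rw [hEdef]
    linarith [h3]
  -- large part
  have hlarge : ∑ j ∈ Finset.Ico (J n) n, (aa n (n+j) - aa n (n-1-j)) ≤ (ε/4) * Real.exp n := by
    have hann : 0 ≤ aa n n := (aa_pos hn1 n).le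
    have step1 : ∑ j ∈ Finset.Ico (J n) n, (aa n (n+j) - aa n (n-1-j))
        ≤ ∑ j ∈ Finset.Ico (J n) n, 2*(n:ℝ)*aa n n * (1/(j:ℝ)^2) := by
      apply Finset.sum_le_sum
      intro j hj
      rw [Finset.mem_Ico] at hj
      have hj1 : 1 ≤ j := le_trans (hJ1 n) hj.1
      have := aa_decay2 hn1 hj1
      have hnn := (aa_pos hn1 (n-1-j)).le
      calc aa n (n+j) - aa n (n-1-j) ≤ aa n (n+j) := by linarith
        _ ≤ 2*(n:ℝ)*aa n n / (j:ℝ)^2 := this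
        _ = 2*(n:ℝ)*aa n n * (1/(j:ℝ)^2) := by ring
    have step2 : ∑ j ∈ Finset.Ico (J n) n, 2*(n:ℝ)*aa n n * (1/(j:ℝ)^2)
        = 2*(n:ℝ)*aa n n * ∑ j ∈ Finset.Ico (J n) n, (1:ℝ)/(j:ℝ)^2 := by
      rw [Finset.mul_sum]
    have step3 := telescope (hJ1 n) n
    have hJR : (K:ℝ) * Real.sqrt n ≤ ((J n : ℕ):ℝ) := by
      rw [hJdef]
      push_cast
      have h5 : Real.sqrt n ≤ ((Nat.sqrt n : ℕ):ℝ) + 1 := Real.real_sqrt_le_nat_sqrt_succ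
      exact mul_le_mul_of_nonneg_left h5 (by positivity)
    have hJRpos : (0:ℝ) < ((J n : ℕ):ℝ) := by exact_mod_cast hJ1 n
    have step4 : (2:ℝ)/((J n : ℕ):ℝ) ≤ 2/((K:ℝ)*Real.sqrt n) := by
      apply div_le_div_of_nonneg_left (by norm_num) (by positivity) hJR
    have hfin : 2*(n:ℝ)*aa n n * (2/((K:ℝ)*Real.sqrt n)) ≤ (ε/4) * Real.exp n := by
      have haan : aa n n ≤ Real.exp n / Real.sqrt n := h1
      have expand : 2*(n:ℝ)*aa n n * (2/((K:ℝ)*Real.sqrt n))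
          ≤ 2*(n:ℝ)*(Real.exp n / Real.sqrt n) * (2/((K:ℝ)*Real.sqrt n)) := by
        apply mul_le_mul_of_nonneg_right _ (by positivity)
        apply mul_le_mul_of_nonneg_left haan (by positivity)
      have hid2 : 2*(n:ℝ)*(Real.exp n / Real.sqrt n) * (2/((K:ℝ)*Real.sqrt n))
          = (4/(K:ℝ)) * Real.exp n := by
        have hms2 : Real.sqrt n ^ 2 = (n:ℝ) := Real.sq_sqrt hnpos.le
        field_simp
        linear_combination (-4) * hms2
      rw [hid2] at expand
      calc 2*(n:ℝ)*aa n n * (2/((K:ℝ)*Real.sqrt n)) ≤ (4/(K:ℝ)) * Real.exp n := expand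
        _ ≤ (ε/4) * Real.exp n := mul_le_mul_of_nonneg_right hK4 hepos.le
    calc ∑ j ∈ Finset.Ico (J n) n, (aa n (n+j) - aa n (n-1-j))
        ≤ 2*(n:ℝ)*aa n n * ∑ j ∈ Finset.Ico (J n) n, (1:ℝ)/(j:ℝ)^2 := by
          rw [← step2]; exact step1
      _ ≤ 2*(n:ℝ)*aa n n * (2/((J n : ℕ):ℝ)) := by
          apply mul_le_mul_of_nonneg_left _ (by positivity)
          calc ∑ j ∈ Finset.Ico (J n) n, (1:ℝ)/(j:ℝ)^2 ≤ 2/((J n : ℕ):ℝ) := step3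
            _ ≤ 2/((J n:ℕ):ℝ) := le_refl _
      _ ≤ 2*(n:ℝ)*aa n n * (2/((K:ℝ)*Real.sqrt n)) := by
          apply mul_le_mul_of_nonneg_left step4 (by positivity)
      _ ≤ (ε/4) * Real.exp n := hfin
  -- combine
  have hupper : Real.exp n - 2 * SS n ≤ (3*ε/4) * Real.exp n := by
    rw [hdec, hsplit]
    linarith
  have hlower : 0 ≤ Real.exp n - 2 * SS n := by
    rw [hdec]
    linarith
  -- conclude
  rw [Real.dist_eq]
  have hS : SS n / Real.exp n - 1/2 ≤ 0 := by
    rw [sub_nonpos, div_le_iff₀ hepos]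
    linarith
  have hS2 : -(ε) < SS n / Real.exp n - 1/2 := by
    have : (1/2 - 3*ε/8) * Real.exp n ≤ SS n := by nlinarith
    rw [← sub_pos]
    have hge : 1/2 - 3*ε/8 ≤ SS n / Real.exp n := by
      rw [le_div_iff₀ hepos]; linarith
    nlinarith
  rw [abs_lt]
  constructor
  · linarith
  · linarith

lemma Slast_tendsto : Tendsto (fun n : ℕ => aa n (n-1) / Real.exp n) atTop (nhds 0) := by
  apply squeeze_zero' (g := fun n : ℕ => 1/Real.sqrt n)
  · filter_upwards [eventually_ge_atTop 1] with n hn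
    exact div_nonneg (aa_pos hn (n-1)).le (Real.exp_pos _).le
  · filter_upwards [aa_n_small, eventually_ge_atTop 1] with n h1 hn
    rw [← aa_base hn]
    have hsq : (0:ℝ) < Real.sqrt n := Real.sqrt_pos.mpr (by exact_mod_cast hn)
    rw [div_le_div_iff₀ (Real.exp_pos _) hsq]
    calc aa n n * Real.sqrt n ≤ (Real.exp n / Real.sqrt n) * Real.sqrt n := by
          have := Real.sqrt_nonneg (n:ℝ)
          have h2 := aa_n_small
          exact mul_le_mul_of_nonneg_right h1 (by positivity)
      _ = Real.exp n := by
          rw [div_mul_eq_mul_div, mul_div_assoc, div_self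
            (Real.sqrt_pos.mpr (by exact_mod_cast hn : (0:ℝ) < n)).ne', mul_one]
      _ ≤ 1 * Real.exp n := by linarith [Real.exp_pos ((n:ℕ):ℝ)]
  · exact invsqrt_tendsto

lemma Sfrac_tendsto :
    Tendsto (fun n : ℕ => (∑ k ∈ Finset.range (n-1), aa n k) / Real.exp n) atTop
      (nhds (1/2)) := by
  have h := half.sub Slast_tendsto
  rw [sub_zero] at h
  apply h.congr'
  filter_upwards [eventually_ge_atTop 1] with n hn
  have hS : SS n = (∑ k ∈ Finset.range (n-1), aa n k) + aa n (n-1) := by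
    unfold SS
    rw [show n = (n-1)+1 from by omega, Finset.sum_range_succ]
    congr 1 <;> rw [show (n-1)+1 = n from by omega]
  rw [hS]
  ring

/-- The Riordan–Sloane quantity `W_n = (n!/n^(n-1)) Σ_{k=0}^{n-2} n^k/k!` as a real. -/
noncomputable def Wr (n : ℕ) : ℝ :=
  ((n.factorial : ℝ) / (n : ℝ) ^ (n - 1)) *
    ∑ k ∈ Finset.range (n - 1), (n : ℝ) ^ k / (k.factorial : ℝ)

/-- `W_n / n^(3/2) → √(2π)/2` as `n → ∞` (Ramanujan, Watson). -/
theorem Wr_asymptotic :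
    Tendsto (fun n : ℕ => Wr n / (n : ℝ) ^ ((3 : ℝ) / 2)) atTop
      (nhds (Real.sqrt (2 * Real.pi) / 2)) := by
  have hlim := (Stirling.tendsto_stirlingSeq_sqrt_pi.mul_const (Real.sqrt 2)).mul Sfrac_tendsto
  have hval : Real.sqrt Real.pi * Real.sqrt 2 * (1/2) = Real.sqrt (2*Real.pi) / 2 := by
    rw [Real.sqrt_mul (by norm_num : (0:ℝ) ≤ 2)]
    ring
  rw [← hval]
  apply hlim.congr'
  filter_upwards [eventually_ge_atTop 1] with n hn
  have hnpos : (0:ℝ) < n := by exact_mod_cast hn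
  have hsq : (0:ℝ) < Real.sqrt n := Real.sqrt_pos.mpr hnpos
  have hepos : (0:ℝ) < Real.exp n := Real.exp_pos _
  have hc : Stirling.stirlingSeq n * (Real.sqrt (2*(n:ℝ)) * ((n:ℝ)/Real.exp 1)^n)
      = (n.factorial : ℝ) := by
    rw [Stirling.stirlingSeq]
    exact div_mul_cancel₀ _ (by positivity)
  have h32 : (n:ℝ)^((3:ℝ)/2) = (n:ℝ) * Real.sqrt n := by
    rw [show (3:ℝ)/2 = 1 + 1/2 by norm_num, Real.rpow_add hnpos, Real.rpow_one,
      ← Real.sqrt_eq_rpow]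
  have hp2 : ((n:ℝ))^(n-1) = (n:ℝ)^n/(n:ℝ) := by
    rw [eq_div_iff hnpos.ne', ← pow_succ, show n-1+1 = n from by omega]
  have hne : ((n:ℝ)/Real.exp 1)^n = (n:ℝ)^n / Real.exp n := by
    rw [div_pow, Real.exp_one_pow]
  have hsplit2 : Real.sqrt (2*(n:ℝ)) = Real.sqrt 2 * Real.sqrt n :=
    Real.sqrt_mul (by norm_num) _
  have hfac : (n.factorial : ℝ) = Stirling.stirlingSeq n * (Real.sqrt 2 * Real.sqrt n
      * ((n:ℝ)^n / Real.exp n)) := by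
    rw [← hc, hsplit2, hne]
  simp only [Wr, aa]
  rw [h32, hfac, hp2]
  have hpn : ((n:ℝ))^n ≠ 0 := by positivity
  field_simp
end
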